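/- Let H be a real Hilbert space, T > 0, let g : ℝ → ℝ be continuous with g(t) ≥ 0 for all t ∈ [0,T], and let x : ℝ → H be differentiable on [0,T] with ⟪x'(t), x(t)⟫ = g(t) (‖x(t)‖² − 1) for every t ∈ [0,T]. If ‖x(0)‖ ≤ 1, then ‖x(t)‖ ≤ 1 for all t ∈ [0,T]. -/

import Mathlib

open RealInnerProductSpace

/-- Abstract form of Lemma 3.1: if `⟪x'(t), x(t)⟫ = g(t)(‖x(t)‖² − 1)` on `[0,T]`
with `g ≥ 0` continuous and `‖x(0)‖ ≤ 1`, then `‖x(t)‖ ≤ 1` on `[0,T]`. -/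
theorem stmt_2 {H : Type*} [NormedAddCommGroup H] [InnerProductSpace ℝ H]
    (T : ℝ) (hT : 0 < T) (g : ℝ → ℝ) (hg : Continuous g)
    (hg0 : ∀ t ∈ Set.Icc (0 : ℝ) T, 0 ≤ g t)
    (x : ℝ → H) (x' : ℝ → H)
    (hx : ∀ t ∈ Set.Icc (0 : ℝ) T, HasDerivAt x (x' t) t)
    (hinner : ∀ t ∈ Set.Icc (0 : ℝ) T, ⟪x' t, x t⟫ = g t * (‖x t‖ ^ 2 - 1))
    (h0 : ‖x 0‖ ≤ 1) :
    ∀ t ∈ Set.Icc (0 : ℝ) T, ‖x t‖ ≤ 1 := by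
  set G : ℝ → ℝ := fun t => ∫ s in (0:ℝ)..t, g s with hGdef
  have hG : ∀ t : ℝ, HasDerivAt G (g t) t := fun t =>
    intervalIntegral.integral_hasDerivAt_right (hg.intervalIntegrable 0 t)
      (hg.stronglyMeasurableAtFilter _ _) hg.continuousAt
  set y : ℝ → ℝ := fun t => ‖x t‖ ^ 2 - 1 with hydef
  set z : ℝ → ℝ := fun t => y t * Real.exp (-(2 * G t)) with hzdef
  have hy : ∀ t ∈ Set.Icc (0 : ℝ) T, HasDerivAt y (2 * g t * y t) t := by
    intro t ht
    have h1 : HasDerivAt (fun s => ⟪x s, x s⟫) (⟪x t, x' t⟫ + ⟪x' t, x t⟫) t :=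
      (hx t ht).inner ℝ (hx t ht)
    have h2 : HasDerivAt y (⟪x t, x' t⟫ + ⟪x' t, x t⟫) t := by
      have : y = fun s => ⟪x s, x s⟫ - 1 := by
        funext s; simp [hydef, real_inner_self_eq_norm_sq]
      rw [this]
      exact h1.sub_const 1
    have h3 : ⟪x t, x' t⟫ + ⟪x' t, x t⟫ = 2 * g t * y t := by
      have hc : ⟪x t, x' t⟫ = ⟪x' t, x t⟫ := real_inner_comm _ _
      rw [hc, hinner t ht]; simp [hydef]; ring
    rwa [h3] at h2
  have hz : ∀ t ∈ Set.Icc (0 : ℝ) T, HasDerivAt z 0 t := by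
    intro t ht
    have he : HasDerivAt (fun s => Real.exp (-(2 * G s))) (-(2 * g t) * Real.exp (-(2 * G t))) t := by
      have : HasDerivAt (fun s => -(2 * G s)) (-(2 * g t)) t := ((hG t).const_mul 2).neg
      convert this.exp using 1; ring
    have := (hy t ht).mul he
    convert this using 1
    · rfl
    · rfl
    · rfl
    · ring
  have hzc : ContinuousOn z (Set.Icc 0 T) := fun t ht => ((hz t ht).continuousAt).continuousWithinAt
  have hconst : ∀ t ∈ Set.Icc (0 : ℝ) T, z t = z 0 :=
    constant_of_has_deriv_right_zero hzc (fun t ht =>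
      ((hz t (Set.mem_Icc_of_Ico ht)).hasDerivWithinAt))
  intro t ht
  have hz0 : z 0 ≤ 0 := by
    have : y 0 ≤ 0 := by
      have : ‖x 0‖ ^ 2 ≤ 1 := by nlinarith [norm_nonneg (x 0)]
      simp [hydef]; linarith
    have := Real.exp_pos (-(2 * G 0))
    simp only [hzdef]
    nlinarith
  have hyt : y t ≤ 0 := by
    have h := hconst t ht
    have hep := Real.exp_pos (-(2 * G t))
    have h2 : y t * Real.exp (-(2 * G t)) ≤ 0 := h.le.trans hz0
    nlinarith
  have hsq : ‖x t‖ ^ 2 ≤ 1 := by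
    have : ‖x t‖ ^ 2 - 1 ≤ 0 := hyt
    linarith
  nlinarith [norm_nonneg (x t)]
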